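/- arXiv:1809.09330 — 2 statements merged into one kernel-verified Lean document; each statement's English description precedes it below -/
import Mathlib

section
/- For a k-dimensional grid of cells, if a set S of cells has projections onto the k coordinate hyperplanes (each projection obtained by deleting one coordinate), then the size of S is at most the product of the k projection sizes raised to the power 1/(k-1); equivalently |S|^{k-1} ≤ ∏_{i=1}^{k} |π_i(S)|, where π_i deletes the i-th coordinate. -/
open Finset NNReal

lemma holder_nnreal {ι : Type*} (n : ℕ) (hn : 0 < n) (T : Finset ι) (a : Fin n → ι → ℝ≥0) :
    ∑ t ∈ T, ∏ j, (a j t) ^ ((n : ℝ)⁻¹) ≤ ∏ j, (∑ t ∈ T, a j t) ^ ((n : ℝ)⁻¹) := by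
  by_cases hA : ∃ j, ∑ t ∈ T, a j t = 0
  · obtain ⟨j, hj⟩ := hA
    have h0 : ∀ t ∈ T, a j t = 0 := fun t ht => by
      have := (Finset.sum_eq_zero_iff.mp hj) t ht
      exact this
    have hz : ∀ t ∈ T, ∏ j', (a j' t) ^ ((n:ℝ)⁻¹) = 0 := by
      intro t ht
      apply Finset.prod_eq_zero (Finset.mem_univ j)
      rw [h0 t ht, NNReal.zero_rpow (by positivity)]
    rw [Finset.sum_congr rfl hz]
    simp
  push_neg at hA
  set A : Fin n → ℝ≥0 := fun j => ∑ t ∈ T, a j t with hAdef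
  have hnR : (n : ℝ≥0) ≠ 0 := Nat.cast_ne_zero.mpr hn.ne'
  have hw : ∑ _j : Fin n, (n : ℝ≥0)⁻¹ = 1 := by
    simp [Finset.sum_const, mul_comm]
    rw [mul_inv_cancel₀ hnR]
  have key : ∀ t ∈ T, ∏ j, (a j t / A j) ^ ((n:ℝ)⁻¹) ≤ ∑ j, (n : ℝ≥0)⁻¹ * (a j t / A j) := by
    intro t _
    have := NNReal.geom_mean_le_arith_mean_weighted Finset.univ
      (fun _ : Fin n => (n : ℝ≥0)⁻¹) (fun j => a j t / A j) hw
    simpa using this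
  have hsum : ∑ t ∈ T, ∏ j, (a j t / A j) ^ ((n:ℝ)⁻¹) ≤ 1 := by
    calc ∑ t ∈ T, ∏ j, (a j t / A j) ^ ((n:ℝ)⁻¹)
        ≤ ∑ t ∈ T, ∑ j, (n : ℝ≥0)⁻¹ * (a j t / A j) := Finset.sum_le_sum key
      _ = ∑ j, (n : ℝ≥0)⁻¹ * ((∑ t ∈ T, a j t) / A j) := by
          rw [Finset.sum_comm]
          refine Finset.sum_congr rfl fun j _ => ?_
          rw [← Finset.mul_sum, ← Finset.sum_div]
      _ = 1 := by
          have : ∀ j : Fin n, (n : ℝ≥0)⁻¹ * ((∑ t ∈ T, a j t) / A j) = (n : ℝ≥0)⁻¹ := by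
            intro j
            rw [div_self (hA j), mul_one]
          rw [Finset.sum_congr rfl fun j _ => this j, hw]
  have hP : (∏ j, (A j) ^ ((n:ℝ)⁻¹)) ≠ 0 := by
    apply Finset.prod_ne_zero_iff.mpr
    intro j _
    simp [NNReal.rpow_eq_zero_iff, hA j]
    exact fun h => absurd h (hA j)
  have hfac : ∀ t, ∏ j, (a j t / A j) ^ ((n:ℝ)⁻¹)
      = (∏ j, (a j t) ^ ((n:ℝ)⁻¹)) / ∏ j, (A j) ^ ((n:ℝ)⁻¹) := by
    intro t
    rw [← Finset.prod_div_distrib]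
    exact Finset.prod_congr rfl fun j _ => NNReal.div_rpow _ _ _
  rw [Finset.sum_congr rfl fun t _ => hfac t, ← Finset.sum_div,
    div_le_one (pos_iff_ne_zero.mpr hP)] at hsum
  exact hsum

lemma holder_nat {ι : Type*} (n : ℕ) (hn : 0 < n) (T : Finset ι) (x : ι → ℕ)
    (a : Fin n → ι → ℕ) (h : ∀ t ∈ T, x t ^ n ≤ ∏ j, a j t) :
    (∑ t ∈ T, x t) ^ n ≤ ∏ j, ∑ t ∈ T, a j t := by
  have key : ((∑ t ∈ T, x t : ℕ) : ℝ≥0) ^ n ≤ ((∏ j, ∑ t ∈ T, a j t : ℕ) : ℝ≥0) := by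
    push_cast
    have step1 : ∀ t ∈ T, ((x t : ℝ≥0)) ≤ ∏ j, ((a j t : ℝ≥0)) ^ ((n:ℝ)⁻¹) := by
      intro t ht
      have h1 : ((x t : ℝ≥0)) ^ n ≤ ∏ j, ((a j t : ℝ≥0)) := by
        have := h t ht
        exact_mod_cast this
      have h2 := NNReal.rpow_le_rpow (z := (n:ℝ)⁻¹) h1 (by positivity)
      rw [← NNReal.rpow_natCast (x t : ℝ≥0) n, ← NNReal.rpow_mul,
        mul_inv_cancel₀ (by exact_mod_cast hn.ne' : (n:ℝ) ≠ 0), NNReal.rpow_one] at h2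
      rw [NNReal.finset_prod_rpow]
      exact h2
      -- careful about orientation of finset_prod_rpow
    have step2 : (∑ t ∈ T, (x t : ℝ≥0)) ≤ ∏ j, (∑ t ∈ T, (a j t : ℝ≥0)) ^ ((n:ℝ)⁻¹) :=
      le_trans (Finset.sum_le_sum step1) (holder_nnreal n hn T fun j t => (a j t : ℝ≥0))
    calc (∑ t ∈ T, (x t : ℝ≥0)) ^ n
        ≤ (∏ j, (∑ t ∈ T, (a j t : ℝ≥0)) ^ ((n:ℝ)⁻¹)) ^ n := pow_le_pow_left₀ (by positivity) step2 n
      _ = ∏ j, (∑ t ∈ T, (a j t : ℝ≥0)) := by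
          rw [← Finset.prod_pow]
          refine Finset.prod_congr rfl fun j _ => ?_
          rw [← NNReal.rpow_natCast (_ ^ ((n:ℝ)⁻¹)) n, ← NNReal.rpow_mul,
            inv_mul_cancel₀ (by exact_mod_cast hn.ne' : (n:ℝ) ≠ 0), NNReal.rpow_one]
  exact_mod_cast by push_cast at key ⊢; exact_mod_cast key

lemma LW : ∀ (k : ℕ) (S : Finset (Fin (k + 1) → ℕ)), S.Nonempty →
    S.card ^ k ≤ ∏ i : Fin (k + 1), (S.image (fun f => f ∘ i.succAbove)).card := by
  intro k
  induction k with
  | zero =>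
    intro S hS
    rw [pow_zero, Fin.prod_univ_one]
    exact Nat.one_le_iff_ne_zero.mpr (Finset.card_ne_zero.mpr (hS.image _))
  | succ k ih =>
    intro S hS
    set T : Finset ℕ := S.image (fun f => f 0) with hT
    set slice : ℕ → Finset (Fin (k + 1) → ℕ) :=
      fun t => (S.filter (fun f => f 0 = t)).image (fun f => f ∘ Fin.succ) with hslice
    set M : ℕ := (S.image (fun f => f ∘ (0 : Fin (k + 2)).succAbove)).card with hM
    -- (1) card of S is sum of slice cards
    have tail_inj : ∀ t : ℕ, Set.InjOn (fun f : Fin (k + 2) → ℕ => f ∘ Fin.succ)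
        ↑(S.filter (fun f => f 0 = t)) := by
      intro t f hf g hg hfg
      simp only [Finset.coe_filter, Set.mem_setOf_eq] at hf hg
      funext m
      cases m using Fin.cases with
      | zero => rw [hf.2, hg.2]
      | succ m => exact congrFun hfg m
    have hcard : S.card = ∑ t ∈ T, (slice t).card := by
      rw [Finset.card_eq_sum_card_fiberwise
        (f := fun f => f 0) (t := T) (fun f hf => Finset.mem_image_of_mem _ hf)]
      exact Finset.sum_congr rfl fun t _ =>
        (Finset.card_image_of_injOn (tail_inj t)).symm
    -- (2) slice cards bounded by M
    have hsliceM : ∀ t, (slice t).card ≤ M := by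
      intro t
      exact Finset.card_le_card (Finset.image_subset_image (Finset.filter_subset _ _))
    -- (3) sum of projected slice cards bounded by projection of S
    have hproj : ∀ j : Fin (k + 1),
        ∑ t ∈ T, ((slice t).image (fun f => f ∘ j.succAbove)).card
          ≤ (S.image (fun f => f ∘ (j.succ).succAbove)).card := by
      intro j
      set P := S.image (fun f => f ∘ (j.succ).succAbove) with hP
      have step : ∀ t ∈ T, ((slice t).image (fun f => f ∘ j.succAbove)).card
          ≤ (P.filter (fun g => g 0 = t)).card := by
        intro t _
        apply Finset.card_le_card_of_injOn (fun h : Fin k → ℕ => Fin.cons (α := fun _ => ℕ) t h)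
        · intro h hh
          rw [hslice] at hh
          simp only [Finset.mem_coe, Finset.mem_image, Finset.mem_filter] at hh
          obtain ⟨h', ⟨f, ⟨hfS, hf0⟩, hft⟩, hh'⟩ := hh
          have hkey : Fin.cons t h = f ∘ (j.succ).succAbove := by
            funext m
            cases m using Fin.cases with
            | zero =>
              simp only [Fin.cons_zero, Function.comp_apply, Fin.succ_succAbove_zero]
              exact hf0.symm
            | succ m =>
              simp only [Fin.cons_succ, Function.comp_apply, Fin.succ_succAbove_succ]
              rw [← hh', ← hft]
              rfl
          rw [Finset.mem_coe, Finset.mem_filter]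
          constructor
          · show Fin.cons t h ∈ P
            rw [hP, hkey]
            exact Finset.mem_image_of_mem _ hfS
          · simp
        · intro h1 _ h2 _ he
          funext m
          have := congrFun he m.succ
          simpa using this
      have disj : ∀ t1 ∈ T, ∀ t2 ∈ T, t1 ≠ t2 →
          Disjoint (P.filter (fun g => g 0 = t1)) (P.filter (fun g => g 0 = t2)) := by
        intro t1 _ t2 _ hne
        simp only [Finset.disjoint_left, Finset.mem_filter]
        rintro g ⟨-, h1⟩ ⟨-, h2⟩
        exact hne (h1 ▸ h2)
      calc ∑ t ∈ T, ((slice t).image (fun f => f ∘ j.succAbove)).card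
          ≤ ∑ t ∈ T, (P.filter (fun g => g 0 = t)).card := Finset.sum_le_sum step
        _ = (T.biUnion (fun t => P.filter (fun g => g 0 = t))).card :=
            (Finset.card_biUnion disj).symm
        _ ≤ P.card := Finset.card_le_card (Finset.biUnion_subset.mpr
            fun t _ => Finset.filter_subset _ _)
    -- (4) slices over T are nonempty, apply IH
    have hne : ∀ t ∈ T, (slice t).Nonempty := by
      intro t ht
      rw [hT] at ht
      obtain ⟨f, hfS, hf0⟩ := Finset.mem_image.mp ht
      exact ⟨f ∘ Fin.succ, Finset.mem_image_of_mem _ (Finset.mem_filter.mpr ⟨hfS, hf0⟩)⟩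
    -- apply Hölder
    set a : Fin (k + 1) → ℕ → ℕ := fun j t =>
      (if j = 0 then M else 1) * ((slice t).image (fun f => f ∘ j.succAbove)).card with ha
    have hprod_ite : (∏ j : Fin (k + 1), if j = 0 then M else 1) = M := by
      rw [Finset.prod_ite_eq' Finset.univ (0 : Fin (k + 1)) (fun _ => M)]
      simp
    have hhold := holder_nat (k + 1) (Nat.succ_pos k) T (fun t => (slice t).card) a ?_
    · rw [hcard]
      refine hhold.trans ?_
      calc ∏ j : Fin (k + 1), ∑ t ∈ T, a j t
          ≤ ∏ j : Fin (k + 1), (if j = 0 then M else 1) *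
              (S.image (fun f => f ∘ (j.succ).succAbove)).card := by
            apply Finset.prod_le_prod (fun _ _ => Nat.zero_le _)
            intro j _
            rw [ha]
            simp only
            rw [← Finset.mul_sum]
            exact Nat.mul_le_mul_left _ (hproj j)
        _ = M * ∏ j : Fin (k + 1), (S.image (fun f => f ∘ (j.succ).succAbove)).card := by
            rw [Finset.prod_mul_distrib, hprod_ite]
        _ = ∏ i : Fin (k + 1 + 1), (S.image (fun f => f ∘ i.succAbove)).card := by
            rw [eq_comm, Fin.prod_univ_succ]
    · intro t ht
      have : ∏ j, a j t = M * ∏ j : Fin (k + 1),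
          ((slice t).image (fun f => f ∘ j.succAbove)).card := by
        rw [ha]
        simp only
        rw [Finset.prod_mul_distrib, hprod_ite]
      rw [this, pow_succ, mul_comm]
      exact Nat.mul_le_mul (hsliceM t) (ih (slice t) (hne t ht))

/-- Discrete Loomis–Whitney inequality: for a finite set `S` of cells in a
`(k+1)`-dimensional grid (so dimension ≥ 2 when `1 ≤ k`), `|S|^k` is at most the
product over the `k+1` coordinate directions of the sizes of the projections of
`S` obtained by deleting that coordinate. -/
theorem stmt_0 (k : ℕ) (hk : 1 ≤ k) (S : Finset (Fin (k + 1) → ℕ)) :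
    S.card ^ k ≤ ∏ i : Fin (k + 1), (S.image (fun f => f ∘ i.succAbove)).card := by
  rcases S.eq_empty_or_nonempty with h | h
  · subst h
    simp [zero_pow (Nat.one_le_iff_ne_zero.mp hk)]
  · exact LW k S h
end

section
/- Suppose R : ℕ → ℝ satisfies R(n) = 7 R(n/2) + c·n²/B for powers of 2 n greater than a base s, with R(s) = M/B, where s = √(rM). Then for n = s·2^t, R(n) = O(7^t · M/B + c·(n²/B)·∑_{i=0}^{t-1} (7/4)^i) = O((n/√(rM))^{log₂ 7} · M/B), i.e., R(n) = O(n^{log₂ 7} · r^{(2−log₂ 7)/2} · M^{1−(log₂ 7)/2} / B). -/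
open Real

/-- Read-cost recurrence of the write-efficient Strassen variant: if
`R(n) = 7·R(n/2) + c·n²/B` above the base `s = √(r·M)` with `R(s) = M/B`, then for
`n = s·2^t`, `R(n) = O(n^(log₂ 7)·r^((2 − log₂ 7)/2)·M^(1 − (log₂ 7)/2)/B)`. -/
theorem stmt_14 (c B M r : ℝ) (hc : 0 < c) (hB : 0 < B) (hM : 0 < M) (hr : 0 < r)
    (hrM : 1 ≤ r * M) (R : ℝ → ℝ)
    (hbase : R (Real.sqrt (r * M)) = M / B)
    (hrec : ∀ t : ℕ,
      R (Real.sqrt (r * M) * 2 ^ (t + 1)) =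
        7 * R (Real.sqrt (r * M) * 2 ^ t) +
          c * (Real.sqrt (r * M) * 2 ^ (t + 1)) ^ 2 / B) :
    ∃ C : ℝ, 0 < C ∧
      ∀ t : ℕ,
        R (Real.sqrt (r * M) * 2 ^ t) ≤
          C * (Real.sqrt (r * M) * 2 ^ t) ^ (Real.logb 2 7) *
            r ^ ((2 - Real.logb 2 7) / 2) * M ^ (1 - Real.logb 2 7 / 2) / B := by
  set s := Real.sqrt (r * M) with hs_def
  have hrM0 : (0:ℝ) ≤ r * M := le_of_lt (mul_pos hr hM)
  have hs2 : s ^ 2 = r * M := Real.sq_sqrt hrM0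
  have hspos : 0 < s := Real.sqrt_pos.mpr (mul_pos hr hM)
  set L := Real.logb 2 7 with hL_def
  -- closed form
  have closed : ∀ t : ℕ,
      R (s * 2 ^ t) = M / B * ((1 + 4*c*r/3) * 7 ^ t - (4*c*r/3) * 4 ^ t) := by
    intro t
    induction t with
    | zero => simpa using hbase
    | succ t ih =>
        rw [hrec t, ih]
        have hsq : (s * 2 ^ (t+1)) ^ 2 = (r * M) * 4 ^ (t+1) := by
          rw [mul_pow, hs2]
          congr 1
          rw [← pow_mul, show (4:ℝ) = 2 ^ 2 by norm_num, ← pow_mul]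
          ring_nf
        rw [hsq, pow_succ (7:ℝ), pow_succ (4:ℝ)]
        field_simp
        ring
  -- power identity
  have h2L : (2:ℝ) ^ L = 7 := Real.rpow_logb (by norm_num) (by norm_num) (by norm_num)
  have hpow : ∀ t : ℕ, (s * 2 ^ t) ^ L * r ^ ((2 - L) / 2) * M ^ (1 - L / 2)
      = 7 ^ t * (r * M) := by
    intro t
    have h2t : (0:ℝ) ≤ (2:ℝ) ^ t := by positivity
    have h1 : (s * 2 ^ t) ^ L = s ^ L * ((2:ℝ) ^ t) ^ L :=
      Real.mul_rpow hspos.le h2t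
    have h2 : ((2:ℝ) ^ t) ^ L = 7 ^ t := by
      rw [← Real.rpow_natCast 2 t, ← Real.rpow_mul (by norm_num : (0:ℝ) ≤ 2),
        mul_comm, Real.rpow_mul (by norm_num : (0:ℝ) ≤ 2), h2L, Real.rpow_natCast]
    have h3 : s ^ L = r ^ (L/2) * M ^ (L/2) := by
      rw [hs_def, Real.sqrt_eq_rpow, ← Real.rpow_mul hrM0,
        Real.mul_rpow hr.le hM.le]
      ring_nf
    rw [h1, h2, h3]
    have hrr : r ^ (L/2) * r ^ ((2 - L)/2) = r := by
      rw [← Real.rpow_add hr, show L/2 + (2 - L)/2 = 1 by ring, Real.rpow_one]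
    have hMM : M ^ (L/2) * M ^ (1 - L/2) = M := by
      rw [← Real.rpow_add hM, show L/2 + (1 - L/2) = 1 by ring, Real.rpow_one]
    calc r ^ (L/2) * M ^ (L/2) * 7 ^ t * r ^ ((2 - L)/2) * M ^ (1 - L/2)
        = 7 ^ t * ((r ^ (L/2) * r ^ ((2 - L)/2)) * (M ^ (L/2) * M ^ (1 - L/2))) := by
          ring
      _ = 7 ^ t * (r * M) := by rw [hrr, hMM]
  refine ⟨(1 + 4*c*r/3) / r, by positivity, fun t => ?_⟩
  have hRHS : (1 + 4*c*r/3) / r * (s * 2 ^ t) ^ L * r ^ ((2 - L) / 2) * M ^ (1 - L / 2) / B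
      = (1 + 4*c*r/3) * 7 ^ t * M / B := by
    calc (1 + 4*c*r/3) / r * (s * 2 ^ t) ^ L * r ^ ((2 - L) / 2) * M ^ (1 - L / 2) / B
        = (1 + 4*c*r/3) / r * ((s * 2 ^ t) ^ L * r ^ ((2 - L) / 2) * M ^ (1 - L / 2)) / B := by
          ring
      _ = (1 + 4*c*r/3) / r * (7 ^ t * (r * M)) / B := by rw [hpow t]
      _ = (1 + 4*c*r/3) * 7 ^ t * M / B := by field_simp
  rw [hRHS, closed t]
  have h4 : (0:ℝ) ≤ (4*c*r/3) * 4 ^ t := by positivity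
  have hMB : (0:ℝ) < M / B := div_pos hM hB
  calc M / B * ((1 + 4*c*r/3) * 7 ^ t - (4*c*r/3) * 4 ^ t)
      ≤ M / B * ((1 + 4*c*r/3) * 7 ^ t) := by
        apply mul_le_mul_of_nonneg_left _ hMB.le
        linarith
    _ = (1 + 4*c*r/3) * 7 ^ t * M / B := by ring
end
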